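/- There exists ε > 0 and a function G : ℂ → ℂ that is analytic on the open horizontal strip {ζ ∈ ℂ : |Im ζ| < ε} and satisfies G(ξ) = Φ̂_k(ξ) for every real ξ; in particular the 2π-periodic function Φ̂_k extends analytically to a strip around the real axis. -/

import Mathlib

set_option maxHeartbeats 1000000

open MeasureTheory Filter
open scoped ENNReal

noncomputable def S (α : ℝ) (k : ℕ) (ξ : ℝ) : ℝ :=
  ∑' j : ℤ, (((ξ - 2 * Real.pi * j) ^ 2 + α ^ 2) ^ k)⁻¹

noncomputable def Lhat (α : ℝ) (k : ℕ) (ξ : ℝ) : ℝ :=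
  (Real.sqrt (2 * Real.pi))⁻¹ * ((ξ ^ 2 + α ^ 2) ^ k)⁻¹ / S α k ξ

noncomputable def Lk (α : ℝ) (k : ℕ) (x : ℝ) : ℝ :=
  (((Real.sqrt (2 * Real.pi) : ℂ))⁻¹ *
    ∫ ξ : ℝ, (Lhat α k ξ : ℂ) * Complex.exp (Complex.I * x * ξ)).re

noncomputable def Phihat (α : ℝ) (k : ℕ) (ξ : ℝ) : ℝ :=
  (-1 : ℝ) ^ k * (Real.sqrt (2 * Real.pi))⁻¹ / S α k ξ

/-- Auxiliary: summability of shifted inverse quadratics over ℤ. -/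
lemma summable_shift (x c : ℝ) (hc : 0 < c) :
    Summable (fun j : ℤ => ((x - 2 * Real.pi * j) ^ 2 + c)⁻¹) := by
  have hs : Summable (fun j : ℤ => 1 / (j : ℝ) ^ 2) :=
    Real.summable_one_div_int_pow.mpr one_lt_two
  refine Summable.of_norm_bounded_eventually hs ?_
  rw [Filter.eventually_cofinite]
  apply (Set.finite_Icc (-(⌈|x|⌉+1)) (⌈|x|⌉+1)).subset
  intro j hj
  simp only [Set.mem_setOf_eq] at hj
  rw [Set.mem_Icc]
  by_contra hcon
  apply hj
  have h0 : (0:ℤ) ≤ ⌈|x|⌉ := Int.ceil_nonneg (abs_nonneg x)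
  have h2 : ⌈|x|⌉ + 1 ≤ |j| := by
    rw [le_abs]
    by_contra hno
    push_neg at hno
    exact hcon ⟨by omega, by omega⟩
  have hx1 : |x| ≤ |(j:ℝ)| := by
    calc |x| ≤ (⌈|x|⌉ : ℝ) := Int.le_ceil _
      _ ≤ ((|j| : ℤ) : ℝ) := by exact_mod_cast le_trans (by omega) h2
      _ = |(j:ℝ)| := by push_cast [Int.cast_abs]; ring
  have hj1 : (1:ℝ) ≤ |(j:ℝ)| := by
    calc (1:ℝ) ≤ ((⌈|x|⌉ + 1 : ℤ) : ℝ) := by exact_mod_cast (by omega : (1:ℤ) ≤ ⌈|x|⌉+1)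
      _ ≤ ((|j| : ℤ) : ℝ) := by exact_mod_cast h2
      _ = |(j:ℝ)| := by push_cast [Int.cast_abs]; ring
  set a : ℝ := (j : ℝ)
  have hπ := Real.pi_gt_three
  have h1 : x * a ≤ |x| * |a| := le_trans (le_abs_self _) (le_of_eq (abs_mul x a))
  have h2' : |x| * |a| ≤ |a| * |a| := mul_le_mul_of_nonneg_right hx1 (abs_nonneg _)
  have h3 : |a| * |a| = a * a := abs_mul_abs_self a
  have hkey : a ^ 2 ≤ (x - 2 * Real.pi * a) ^ 2 := by
    nlinarith [sq_nonneg x, sq_nonneg a,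
      mul_le_mul_of_nonneg_left (h1.trans (h2'.trans_eq h3)) Real.pi_pos.le,
      mul_nonneg (sq_nonneg (Real.pi - 3)) (sq_nonneg a),
      mul_nonneg (sub_nonneg.mpr hπ.le) (sq_nonneg a)]
  have ha2 : (0:ℝ) < a ^ 2 := by nlinarith
  rw [Real.norm_eq_abs, abs_of_nonneg (by positivity), one_div]
  exact inv_anti₀ ha2 (by nlinarith)

/-- Auxiliary: a complex number in a thin sector has `w ^ k` with positive real part. -/
lemma re_pow_pos {k : ℕ} (hk : 1 ≤ k) {w : ℂ} (hre : 0 < w.re)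
    (him : |w.im| * (2 * k) ≤ w.re) : 0 < (w ^ k).re := by
  have hw : w ≠ 0 := fun h => by simp [h] at hre
  have habs : 0 < ‖w‖ := norm_pos_iff.mpr hw
  have hk0 : (0:ℝ) < (k:ℝ) := by exact_mod_cast hk
  set θ := Complex.arg w with hθdef
  have hθ2 : |θ| ≤ Real.pi / 2 := Complex.abs_arg_le_pi_div_two_iff.mpr hre.le
  have hsin : Real.sin |θ| ≤ |w.im| / ‖w‖ := by
    rcases le_or_gt 0 θ with h | h
    · rw [abs_of_nonneg h, Complex.sin_arg]
      exact div_le_div_of_nonneg_right (le_abs_self _) habs.le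
    · rw [abs_of_neg h, Real.sin_neg, Complex.sin_arg, ← neg_div]
      exact div_le_div_of_nonneg_right (neg_le_abs _) habs.le
  have hsin2 : |w.im| / ‖w‖ ≤ 1 / (2 * k) := by
    have h1 : |w.im| / ‖w‖ ≤ |w.im| / w.re :=
      div_le_div_of_nonneg_left (abs_nonneg _) hre (Complex.re_le_norm w)
    have h2 : |w.im| / w.re ≤ 1 / (2 * k) := by
      rw [div_le_div_iff₀ hre (by positivity)]
      linarith [him]
    linarith
  have hθb : |θ| ≤ Real.pi / 2 * (1 / (2 * k)) := by
    have hms := Real.mul_le_sin (abs_nonneg θ) hθ2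
    have hchain : 2 / Real.pi * |θ| ≤ 1 / (2 * k) := le_trans hms (hsin.trans hsin2)
    have hπ := Real.pi_pos
    calc |θ| = Real.pi / 2 * (2 / Real.pi * |θ|) := by field_simp
      _ ≤ Real.pi / 2 * (1 / (2 * k)) := mul_le_mul_of_nonneg_left hchain (by positivity)
  have hkθ : |(k:ℝ) * θ| < Real.pi / 2 := by
    rw [abs_mul, abs_of_nonneg hk0.le]
    have hmul : (k:ℝ) * |θ| ≤ (k:ℝ) * (Real.pi / 2 * (1 / (2 * k))) :=
      mul_le_mul_of_nonneg_left hθb hk0.le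
    have heq : (k:ℝ) * (Real.pi / 2 * (1 / (2 * k))) = Real.pi / 4 := by field_simp; ring
    have hπ := Real.pi_pos
    linarith [hmul.trans_eq heq]
  have hcos : 0 < Real.cos ((k:ℝ) * θ) := by
    apply Real.cos_pos_of_mem_Ioo
    exact ⟨by linarith [(abs_lt.mp hkθ).1], (abs_lt.mp hkθ).2⟩
  have hw' : w = (‖w‖ : ℂ) * Complex.exp (θ * Complex.I) :=
    (Complex.norm_mul_exp_arg_mul_I w).symm
  have hpow : w ^ k
      = ((‖w‖ ^ k : ℝ) : ℂ) * Complex.exp (((k:ℝ) * θ : ℝ) * Complex.I) := by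
    conv_lhs => rw [hw']
    rw [mul_pow, ← Complex.exp_nat_mul]
    push_cast
    ring_nf
  rw [hpow, Complex.re_ofReal_mul, Complex.exp_ofReal_mul_I_re]
  positivity

/-- Auxiliary: norm bound for the terms of the analytically continued sum. -/
lemma norm_term_le {α : ℝ} (hα : 0 < α) (m : ℕ) (j : ℤ) (ζ : ℂ) (him : |ζ.im| ≤ α / 2) :
    ‖(((ζ - ((2 * Real.pi * (j:ℝ) : ℝ) : ℂ)) ^ 2 + ((α ^ 2 : ℝ) : ℂ)) ^ (m+1))⁻¹‖ ≤
      ((ζ.re - 2 * Real.pi * j) ^ 2 + α ^ 2 / 2)⁻¹ * ((α ^ 2 / 2) ^ m)⁻¹ := by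
  set c : ℝ := α ^ 2 / 2 with hcdef
  have hc : 0 < c := by positivity
  set a : ℝ := ζ.re - 2 * Real.pi * j with hadef
  set w : ℂ := (ζ - ((2 * Real.pi * (j:ℝ) : ℝ) : ℂ)) ^ 2 + ((α ^ 2 : ℝ) : ℂ) with hwdef
  have hwre : w.re = a ^ 2 - ζ.im ^ 2 + α ^ 2 := by
    simp [hwdef, hadef, pow_two, Complex.mul_re, Complex.sub_re, Complex.sub_im,
      Complex.add_re, Complex.ofReal_re, Complex.ofReal_im]
    try ring
  have him2 : ζ.im ^ 2 ≤ (α / 2) ^ 2 := by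
    rw [← sq_abs]
    exact pow_le_pow_left₀ (abs_nonneg _) him 2
  have h1 : a ^ 2 + c ≤ w.re := by rw [hwre]; nlinarith
  have habs : a ^ 2 + c ≤ ‖w‖ := h1.trans (Complex.re_le_norm w)
  have hcw : c ≤ ‖w‖ := le_trans (by nlinarith [sq_nonneg a]) habs
  have hpow : (a ^ 2 + c) * c ^ m ≤ ‖w‖ ^ (m + 1) := by
    calc (a ^ 2 + c) * c ^ m ≤ ‖w‖ * ‖w‖ ^ m :=
          mul_le_mul habs (pow_le_pow_left₀ hc.le hcw m) (by positivity) (by positivity)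
      _ = ‖w‖ ^ (m + 1) := (pow_succ' _ _).symm
  rw [norm_inv, norm_pow, ← mul_inv]
  exact inv_anti₀ (by positivity) hpow

/-- Auxiliary: the analytic continuation of the periodized sum. -/
noncomputable def Tc (α : ℝ) (k : ℕ) (ζ : ℂ) : ℂ :=
  ∑' j : ℤ, (((ζ - ((2 * Real.pi * (j:ℝ) : ℝ) : ℂ)) ^ 2 + ((α ^ 2 : ℝ) : ℂ)) ^ k)⁻¹

/-- The 2π-periodic function Φ̂ₖ extends analytically to a strip
around the real axis. -/
theorem stmt_1 (α : ℝ) (hα : 0 < α) (k : ℕ) (hk : 1 ≤ k) :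
    ∃ ε > (0 : ℝ), ∃ G : ℂ → ℂ,
      AnalyticOnNhd ℂ G {ζ : ℂ | |ζ.im| < ε} ∧
      ∀ ξ : ℝ, G ξ = (Phihat α k ξ : ℂ) := by
  obtain ⟨m, hm⟩ : ∃ m, k = m + 1 := ⟨k - 1, by omega⟩
  set c : ℝ := α ^ 2 / 2 with hcdef
  have hc : 0 < c := by positivity
  have hk0 : (0:ℝ) < (k:ℝ) := by exact_mod_cast hk
  set ε : ℝ := α / (4 * k) with hεdef
  have hεpos : 0 < ε := by positivity
  have hk1 : (1:ℝ) ≤ (k:ℝ) := by exact_mod_cast hk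
  have hεα : ε ≤ α / 4 := by
    rw [hεdef]
    apply div_le_div_of_nonneg_left hα.le (by norm_num)
    linarith
  have key : ∀ ζ₀ : ℂ, |ζ₀.im| < ε → AnalyticAt ℂ (Tc α k) ζ₀ ∧ Tc α k ζ₀ ≠ 0 := by
    intro ζ₀ hζ₀
    have himα : |ζ₀.im| ≤ α / 2 := by linarith
    have hsum : Summable (fun j : ℤ =>
        (((ζ₀ - ((2 * Real.pi * (j:ℝ) : ℝ) : ℂ)) ^ 2 + ((α ^ 2 : ℝ) : ℂ)) ^ k)⁻¹) := by
      apply Summable.of_norm_bounded ((summable_shift ζ₀.re c hc).mul_right ((c ^ m)⁻¹))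
      intro j
      rw [hm]
      exact norm_term_le hα m j ζ₀ himα
    have hrepos : ∀ j : ℤ,
        0 < ((((ζ₀ - ((2 * Real.pi * (j:ℝ) : ℝ) : ℂ)) ^ 2 + ((α ^ 2 : ℝ) : ℂ)) ^ k)⁻¹).re := by
      intro j
      set w : ℂ := (ζ₀ - ((2 * Real.pi * (j:ℝ) : ℝ) : ℂ)) ^ 2 + ((α ^ 2 : ℝ) : ℂ) with hwdef
      set a : ℝ := ζ₀.re - 2 * Real.pi * j with hadef
      have hwre : w.re = a ^ 2 - ζ₀.im ^ 2 + α ^ 2 := by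
        simp [hwdef, hadef, pow_two, Complex.mul_re, Complex.sub_re, Complex.sub_im,
          Complex.add_re, Complex.ofReal_re, Complex.ofReal_im]
        try ring
      have hwim : w.im = 2 * ζ₀.im * a := by
        simp [hwdef, hadef, pow_two, Complex.mul_im, Complex.sub_re, Complex.sub_im,
          Complex.add_im, Complex.ofReal_re, Complex.ofReal_im]
        try ring
      have him2 : ζ₀.im ^ 2 ≤ (α / 4) ^ 2 := by
        rw [← sq_abs]
        exact pow_le_pow_left₀ (abs_nonneg _) (by linarith) 2
      have hre : 0 < w.re := by rw [hwre]; nlinarith [sq_nonneg a]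
      have hcond : |w.im| * (2 * k) ≤ w.re := by
        rw [hwim, hwre, abs_mul, abs_mul]
        have himb : |ζ₀.im| ≤ α / (4 * k) := hζ₀.le
        have hknn : (0:ℝ) < 4 * k := by positivity
        have h1 : |(2:ℝ)| * |ζ₀.im| * |a| * (2 * k) ≤ α * |a| := by
          rw [abs_two]
          have : |ζ₀.im| * (4 * k) ≤ α := by
            rw [← le_div_iff₀ hknn]; exact himb
          nlinarith [abs_nonneg a, abs_nonneg ζ₀.im]
        have h2 : α * |a| ≤ a ^ 2 - ζ₀.im ^ 2 + α ^ 2 := by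
          nlinarith [sq_nonneg (|a| - α / 2), sq_abs a, abs_nonneg a]
        linarith
      have hwk := re_pow_pos hk hre hcond
      rw [Complex.inv_re]
      apply div_pos hwk
      apply Complex.normSq_pos.mpr
      exact pow_ne_zero _ (fun h => by rw [h] at hre; simp at hre)
    have hTre : 0 < (Tc α k ζ₀).re := by
      rw [Tc, Complex.re_tsum hsum]
      exact Summable.tsum_pos ((Complex.hasSum_re hsum.hasSum).summable)
        (fun j => (hrepos j).le) 0 (hrepos 0)
    have hTne : Tc α k ζ₀ ≠ 0 := fun h => by rw [h] at hTre; simp at hTre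
    set ρ : ℝ := min 1 (α / 4) with hρdef
    have hρpos : 0 < ρ := lt_min one_pos (by positivity)
    have hmem : ∀ ζ ∈ Metric.ball ζ₀ ρ, |ζ.im| ≤ α / 2 ∧ |ζ.re - ζ₀.re| ≤ 1 := by
      intro ζ hζ
      rw [Metric.mem_ball, Complex.dist_eq] at hζ
      have h1 : |ζ.im - ζ₀.im| ≤ ‖(ζ - ζ₀)‖ := by
        simpa using Complex.abs_im_le_norm (ζ - ζ₀)
      have h2 : |ζ.re - ζ₀.re| ≤ ‖(ζ - ζ₀)‖ := by
        simpa using Complex.abs_re_le_norm (ζ - ζ₀)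
      have h3 : ρ ≤ α / 4 := min_le_right _ _
      have h4 : ρ ≤ 1 := min_le_left _ _
      constructor
      · have : |ζ.im| ≤ |ζ₀.im| + |ζ.im - ζ₀.im| := by
          calc |ζ.im| = |ζ₀.im + (ζ.im - ζ₀.im)| := by ring_nf
            _ ≤ |ζ₀.im| + |ζ.im - ζ₀.im| := abs_add_le _ _
        linarith
      · linarith
    have hdiff : DifferentiableOn ℂ (Tc α k) (Metric.ball ζ₀ ρ) := by
      have : DifferentiableOn ℂ
          (fun ζ : ℂ => ∑' j : ℤ,
            (((ζ - ((2 * Real.pi * (j:ℝ) : ℝ) : ℂ)) ^ 2 + ((α ^ 2 : ℝ) : ℂ)) ^ k)⁻¹)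
          (Metric.ball ζ₀ ρ) := by
        apply Complex.differentiableOn_tsum_of_summable_norm
          (u := fun j : ℤ => (2 + 2 / c) * ((((ζ₀.re - 2 * Real.pi * j) ^ 2 + c)⁻¹ * ((c ^ m)⁻¹))))
        · exact ((summable_shift ζ₀.re c hc).mul_right _).mul_left _
        · intro j
          apply DifferentiableOn.inv
          · exact ((((differentiable_id.sub_const _).pow 2).add_const _).pow k).differentiableOn
          · intro ζ hζ
            apply pow_ne_zero
            intro h
            have hre0 : ((ζ - ((2 * Real.pi * (j:ℝ) : ℝ) : ℂ)) ^ 2 + ((α ^ 2 : ℝ) : ℂ)).re = 0 := by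
              rw [h]; simp
            have hwre : ((ζ - ((2 * Real.pi * (j:ℝ) : ℝ) : ℂ)) ^ 2 + ((α ^ 2 : ℝ) : ℂ)).re
                = (ζ.re - 2 * Real.pi * j) ^ 2 - ζ.im ^ 2 + α ^ 2 := by
              simp [pow_two, Complex.mul_re, Complex.sub_re, Complex.sub_im,
                Complex.add_re, Complex.ofReal_re, Complex.ofReal_im]
              try ring
            have him := (hmem ζ hζ).1
            have him2 : ζ.im ^ 2 ≤ (α / 2) ^ 2 := by
              rw [← sq_abs]; exact pow_le_pow_left₀ (abs_nonneg _) him 2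
            rw [hwre] at hre0
            nlinarith [sq_nonneg (ζ.re - 2 * Real.pi * j)]
        · exact Metric.isOpen_ball
        · intro j ζ hζ
          obtain ⟨h1, h2⟩ := hmem ζ hζ
          have hb := norm_term_le hα m j ζ h1
          rw [hm]
          refine hb.trans ?_
          set aa : ℝ := ζ.re - 2 * Real.pi * j with haa
          set bb : ℝ := ζ₀.re - 2 * Real.pi * j with hbb
          have hab : (aa - bb) ^ 2 ≤ 1 := by
            have heq : aa - bb = ζ.re - ζ₀.re := by rw [haa, hbb]; ring
            rw [heq, ← sq_abs]
            calc |ζ.re - ζ₀.re| ^ 2 ≤ 1 ^ 2 := pow_le_pow_left₀ (abs_nonneg _) h2 2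
              _ = 1 := one_pow 2
          have hpos1 : 0 < aa ^ 2 + c := by positivity
          have hpos2 : 0 < c * (bb ^ 2 + c) := by positivity
          have hbb2 : bb ^ 2 ≤ 2 * aa ^ 2 + 2 := by
            nlinarith [hab, sq_nonneg (2 * aa - bb)]
          have hmain : c * (bb ^ 2 + c) ≤ (2 * c + 2) * (aa ^ 2 + c) := by
            nlinarith [mul_le_mul_of_nonneg_left hbb2 hc.le, sq_nonneg aa, sq_nonneg c]
          have hineq : (aa ^ 2 + c)⁻¹ ≤ (2 + 2 / c) * (bb ^ 2 + c)⁻¹ := by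
            have h2c : (2 + 2 / c) = (2 * c + 2) / c := by field_simp
            rw [h2c, inv_eq_one_div, inv_eq_one_div, div_mul_div_comm, mul_one,
              div_le_div_iff₀ hpos1 hpos2]
            nlinarith [hmain]
          calc (aa ^ 2 + c)⁻¹ * (c ^ m)⁻¹
              ≤ ((2 + 2 / c) * (bb ^ 2 + c)⁻¹) * (c ^ m)⁻¹ :=
                mul_le_mul_of_nonneg_right hineq (by positivity)
            _ = (2 + 2 / c) * ((bb ^ 2 + c)⁻¹ * (c ^ m)⁻¹) := by ring
      exact this.congr (fun ζ _ => by rw [Tc])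
    exact ⟨hdiff.analyticAt (Metric.ball_mem_nhds _ hρpos), hTne⟩
  refine ⟨ε, hεpos,
    fun ζ => ((-1 : ℂ) ^ k * ((Real.sqrt (2 * Real.pi) : ℝ) : ℂ)⁻¹) / Tc α k ζ, ?_, ?_⟩
  · intro ζ hζ
    exact analyticAt_const.div (key ζ hζ).1 (key ζ hζ).2
  · intro ξ
    have hTξ : Tc α k (ξ : ℂ) = ((S α k ξ : ℝ) : ℂ) := by
      rw [Tc, S, Complex.ofReal_tsum]
      apply tsum_congr
      intro j
      push_cast
      ring
    show ((-1 : ℂ) ^ k * ((Real.sqrt (2 * Real.pi) : ℝ) : ℂ)⁻¹) / Tc α k ξ = _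
    rw [hTξ, Phihat]
    push_cast
    ring
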